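/- Let n ≥ 6 and let Γ_1,…,Γ_{n−2} be 3-element subsets of N = {1,…,n} satisfying condition (†). Then every element of N has valence at least 2, at least 6 elements of N have valence exactly 2, and if in addition every valence is at most 3 then exactly 6 elements of N have valence 2. -/

import Mathlib

open Finset

/-- The valence of an element `i` of `N = {1,…,n}` with respect to the hypergraph
`Γ_1, …, Γ_{n-2}`: the number of hyperedges containing `i`. -/
def valence (n : ℕ) (Γ : ℕ → Finset ℕ) (i : ℕ) : ℕ :=
  ((Finset.Icc 1 (n - 2)).filter fun j => i ∈ Γ j).card

/-- For a 3-uniform hypergraph `Γ_1,…,Γ_{n-2}` on `N = {1,…,n}` (n ≥ 6) satisfying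
condition (†), every element of `N` has valence at least 2, at least 6 elements have
valence exactly 2, and if in addition every valence is at most 3 then exactly 6
elements have valence 2. -/
theorem valence_of_dagger (n : ℕ) (hn : 6 ≤ n) (Γ : ℕ → Finset ℕ)
    (hsub : ∀ j ∈ Finset.Icc 1 (n - 2), Γ j ⊆ Finset.Icc 1 n)
    (hcard : ∀ j ∈ Finset.Icc 1 (n - 2), (Γ j).card = 3)
    (hdag : ∀ S ⊆ Finset.Icc 1 (n - 2), 2 ≤ S.card → S.card ≤ n - 3 →
      S.card + 3 ≤ (S.biUnion Γ).card) :
    (∀ i ∈ Finset.Icc 1 n, 2 ≤ valence n Γ i) ∧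
    6 ≤ ((Finset.Icc 1 n).filter fun i => valence n Γ i = 2).card ∧
    ((∀ i ∈ Finset.Icc 1 n, valence n Γ i ≤ 3) →
      ((Finset.Icc 1 n).filter fun i => valence n Γ i = 2).card = 6) := by
  have hA : (Finset.Icc 1 n).card = n := by simp
  have hB : (Finset.Icc 1 (n - 2)).card = n - 2 := by simp
  -- Double counting: total valence is 3(n-2).
  have hsum : ∑ i ∈ Finset.Icc 1 n, valence n Γ i = 3 * (n - 2) := by
    unfold valence
    calc ∑ i ∈ Finset.Icc 1 n, ((Finset.Icc 1 (n - 2)).filter fun j => i ∈ Γ j).card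
        = ∑ i ∈ Finset.Icc 1 n, ∑ j ∈ Finset.Icc 1 (n - 2),
            (if i ∈ Γ j then 1 else 0) := by
          refine Finset.sum_congr rfl fun i _ => ?_
          rw [Finset.card_filter]
      _ = ∑ j ∈ Finset.Icc 1 (n - 2), ∑ i ∈ Finset.Icc 1 n,
            (if i ∈ Γ j then 1 else 0) := Finset.sum_comm
      _ = ∑ j ∈ Finset.Icc 1 (n - 2), ((Finset.Icc 1 n).filter fun i => i ∈ Γ j).card := by
          refine Finset.sum_congr rfl fun j _ => ?_
          rw [Finset.card_filter]
      _ = ∑ j ∈ Finset.Icc 1 (n - 2), (Γ j).card := by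
          refine Finset.sum_congr rfl fun j hj => ?_
          congr 1
          rw [Finset.filter_mem_eq_inter, Finset.inter_eq_right.mpr (hsub j hj)]
      _ = ∑ j ∈ Finset.Icc 1 (n - 2), 3 := Finset.sum_congr rfl hcard
      _ = 3 * (n - 2) := by rw [Finset.sum_const, hB]; ring
  -- Every element has valence at least 2.
  have h2 : ∀ i ∈ Finset.Icc 1 n, 2 ≤ valence n Γ i := by
    intro i hi
    by_contra hlt
    push_neg at hlt
    have hspl := Finset.card_filter_add_card_filter_not
      (s := Finset.Icc 1 (n - 2)) (p := fun j => i ∈ Γ j)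
    have hT : n - 3 ≤ ((Finset.Icc 1 (n - 2)).filter fun j => ¬ i ∈ Γ j).card := by
      unfold valence at hlt
      omega
    obtain ⟨S, hST, hS⟩ := Finset.exists_subset_card_eq hT
    have hSsub : S ⊆ Finset.Icc 1 (n - 2) := hST.trans (Finset.filter_subset _ _)
    have hd := hdag S hSsub (by omega) (by omega)
    have hbi : S.biUnion Γ ⊆ (Finset.Icc 1 n).erase i := by
      intro x hx
      obtain ⟨j, hjS, hxj⟩ := Finset.mem_biUnion.mp hx
      have hjT := hST hjS
      rw [Finset.mem_filter] at hjT
      refine Finset.mem_erase.mpr ⟨?_, hsub j hjT.1 hxj⟩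
      rintro rfl; exact hjT.2 hxj
    have hle : (S.biUnion Γ).card ≤ n - 1 := by
      have := Finset.card_le_card hbi
      rwa [Finset.card_erase_of_mem hi, hA] at this
    omega
  refine ⟨h2, ?_, ?_⟩
  · -- at least 6 elements of valence 2
    have hk : ((Finset.Icc 1 n).filter fun i => valence n Γ i = 2).card
        = ∑ i ∈ Finset.Icc 1 n, (if valence n Γ i = 2 then 1 else 0) :=
      Finset.card_filter _ _
    have key : ∀ i ∈ Finset.Icc 1 n,
        3 ≤ valence n Γ i + (if valence n Γ i = 2 then 1 else 0) := by
      intro i hi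
      have := h2 i hi
      split_ifs with h <;> omega
    have := Finset.sum_le_sum key
    rw [Finset.sum_const, hA, smul_eq_mul, Finset.sum_add_distrib, hsum] at this
    rw [hk]
    omega
  · -- exactly 6 if all valences are ≤ 3
    intro hle
    have hk : ((Finset.Icc 1 n).filter fun i => valence n Γ i = 2).card
        = ∑ i ∈ Finset.Icc 1 n, (if valence n Γ i = 2 then 1 else 0) :=
      Finset.card_filter _ _
    have key : ∀ i ∈ Finset.Icc 1 n,
        valence n Γ i + (if valence n Γ i = 2 then 1 else 0) = 3 := by
      intro i hi
      have h1 := h2 i hi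
      have h3 := hle i hi
      split_ifs with h <;> omega
    have := Finset.sum_congr rfl key
    rw [Finset.sum_const, hA, smul_eq_mul, Finset.sum_add_distrib, hsum] at this
    rw [hk]
    omega
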